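/- Let D, H₀ ∈ ℝ³ with D ≠ 0. Define H⊥ = H₀ − ‖D‖⁻² • ⟨H₀, D⟩ • D and δ* = ‖D‖⁻² • (D × H⊥). Then H₀ + D × δ* = ‖D‖⁻² • ⟨H₀, D⟩ • D, and hence ‖H₀ + D × δ*‖ = |⟨H₀, D⟩| / ‖D‖. In particular the lower bound ‖H₀ + D × δ‖ ≥ |⟨H₀, D⟩|/‖D‖ (valid for all δ) is attained at δ = δ*. -/

import Mathlib

open RealInnerProductSpace

/-- Cross product on `EuclideanSpace ℝ (Fin 3)`. -/
noncomputable def cross3 (a b : EuclideanSpace ℝ (Fin 3)) : EuclideanSpace ℝ (Fin 3) :=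
  (WithLp.equiv 2 (Fin 3 → ℝ)).symm
    ![a 1 * b 2 - a 2 * b 1, a 2 * b 0 - a 0 * b 2, a 0 * b 1 - a 1 * b 0]

lemma cross3_inner_right (a b : EuclideanSpace ℝ (Fin 3)) : ⟪cross3 a b, a⟫ = 0 := by
  simp [cross3, PiLp.inner_apply, Fin.sum_univ_three, WithLp.equiv_symm_apply, PiLp.toLp_apply]
  ring

theorem stmt14 (D H₀ : EuclideanSpace ℝ (Fin 3)) (hD : D ≠ 0)
    (Hperp δstar : EuclideanSpace ℝ (Fin 3))
    (hHperp : Hperp = H₀ - (‖D‖ ^ 2)⁻¹ • ⟪H₀, D⟫ • D)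
    (hδstar : δstar = (‖D‖ ^ 2)⁻¹ • cross3 D Hperp) :
    H₀ + cross3 D δstar = (‖D‖ ^ 2)⁻¹ • ⟪H₀, D⟫ • D ∧
    ‖H₀ + cross3 D δstar‖ = |⟪H₀, D⟫| / ‖D‖ ∧
    ∀ δ : EuclideanSpace ℝ (Fin 3), |⟪H₀, D⟫| / ‖D‖ ≤ ‖H₀ + cross3 D δ‖ := by
  have hDpos : (0:ℝ) < ‖D‖ := norm_pos_iff.mpr hD
  have hnorm : ‖D‖ ^ 2 = D 0 ^ 2 + D 1 ^ 2 + D 2 ^ 2 := by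
    rw [← real_inner_self_eq_norm_sq]
    simp only [PiLp.inner_apply, Fin.sum_univ_three, RCLike.inner_apply, conj_trivial]
    ring
  have hinner : ⟪H₀, D⟫ = H₀ 0 * D 0 + H₀ 1 * D 1 + H₀ 2 * D 2 := by
    simp [PiLp.inner_apply, Fin.sum_univ_three]
    ring
  have hs : D 0 ^ 2 + D 1 ^ 2 + D 2 ^ 2 ≠ 0 := by
    rw [← hnorm]; positivity
  have heq : H₀ + cross3 D δstar = (‖D‖ ^ 2)⁻¹ • ⟪H₀, D⟫ • D := by
    subst hδstar hHperp
    ext i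
    fin_cases i <;>
    · simp [cross3, PiLp.inner_apply, PiLp.smul_apply, PiLp.add_apply, PiLp.sub_apply,
        WithLp.equiv_symm_apply, PiLp.toLp_apply, hnorm, hinner, smul_eq_mul]
      field_simp
      ring
  refine ⟨heq, ?_, ?_⟩
  · rw [heq, norm_smul, norm_smul, norm_inv, norm_pow, norm_norm, Real.norm_eq_abs]
    rw [sq]
    field_simp
  · intro δ
    have h1 : ⟪H₀ + cross3 D δ, D⟫ = ⟪H₀, D⟫ := by
      rw [inner_add_left, cross3_inner_right, add_zero]
    have h2 : |⟪H₀ + cross3 D δ, D⟫| ≤ ‖H₀ + cross3 D δ‖ * ‖D‖ :=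
      abs_real_inner_le_norm _ _
    rw [h1] at h2
    rw [div_le_iff₀ hDpos]
    exact h2
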